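/- Let F be a field with surjective discrete valuation v, residue field k, residue map res, and tame symbol ∂(u,w) = (−1)^{v(u)v(w)} · res(w^{v(u)} u^{−v(w)}). Then for every u ∈ F^× with u ≠ 1, ∂(u, 1−u) = 1. -/

import Mathlib

/-- Steinberg relation for the tame symbol: `∂(u, 1-u) = 1` for `u ≠ 0, 1`. -/
theorem stmt13 (F K : Type*) [Field F] [Field K]
    (v : F → ℤ) (res : F → K)
    (hv_mul : ∀ x y : F, x ≠ 0 → y ≠ 0 → v (x * y) = v x + v y)
    (hv_add : ∀ x y : F, x ≠ 0 → y ≠ 0 → x + y ≠ 0 → min (v x) (v y) ≤ v (x + y))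
    (hv_surj : ∀ n : ℤ, ∃ x : F, x ≠ 0 ∧ v x = n)
    (hres_zero : res 0 = 0) (hres_one : res 1 = 1)
    (hres_mul : ∀ x y : F, (x = 0 ∨ 0 ≤ v x) → (y = 0 ∨ 0 ≤ v y) →
      res (x * y) = res x * res y)
    (hres_add : ∀ x y : F, (x = 0 ∨ 0 ≤ v x) → (y = 0 ∨ 0 ≤ v y) →
      res (x + y) = res x + res y)
    (hres_ker : ∀ x : F, x ≠ 0 → 0 ≤ v x → (res x = 0 ↔ 0 < v x))
    (tame : F → F → K)
    (htame : ∀ u w : F,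
      tame u w = (-1 : K) ^ (v u * v w) * res (w ^ (v u) * u ^ (-(v w)))) :
    ∀ u : F, u ≠ 0 → u ≠ 1 → tame u (1 - u) = 1 := by
  -- basic valuation facts
  have h1 : v 1 = 0 := by
    have := hv_mul 1 1 one_ne_zero one_ne_zero
    rw [one_mul] at this; omega
  have hneg1 : v (-1 : F) = 0 := by
    have := hv_mul (-1) (-1) (by norm_num) (by norm_num)
    rw [neg_mul_neg, one_mul, h1] at this; omega
  have hvneg : ∀ x : F, x ≠ 0 → v (-x) = v x := by
    intro x hx
    have := hv_mul (-1) x (by norm_num) hx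
    rw [neg_one_mul, hneg1] at this; omega
  have hvinv : ∀ x : F, x ≠ 0 → v x⁻¹ = -v x := by
    intro x hx
    have := hv_mul x x⁻¹ hx (inv_ne_zero hx)
    rw [mul_inv_cancel₀ hx, h1] at this; omega
  have hvpow : ∀ x : F, x ≠ 0 → ∀ n : ℕ, v (x ^ n) = n * v x := by
    intro x hx n
    induction n with
    | zero => simpa using h1
    | succ m ih =>
      rw [pow_succ, hv_mul _ _ (pow_ne_zero m hx) hx, ih]
      push_cast; ring
  have hvzpow : ∀ x : F, x ≠ 0 → ∀ n : ℤ, v (x ^ n) = n * v x := by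
    intro x hx n
    rcases n with m | m
    · rw [Int.ofNat_eq_coe, zpow_natCast, hvpow x hx m]
    · rw [zpow_negSucc, hvinv _ (pow_ne_zero _ hx), hvpow x hx]
      simp [Int.negSucc_eq]; ring
  -- residue facts
  have hresneg1 : res (-1 : F) = -1 := by
    have := hres_add (-1) 1 (Or.inr (by rw [hneg1])) (Or.inr (by rw [h1]))
    rw [neg_add_cancel, hres_zero, hres_one] at this
    linear_combination -this
  have hrespow : ∀ x : F, x ≠ 0 → 0 ≤ v x → ∀ n : ℕ, res (x ^ n) = res x ^ n := by
    intro x hx hvx n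
    induction n with
    | zero => simpa using hres_one
    | succ m ih =>
      rw [pow_succ, hres_mul _ _ (Or.inr (by rw [hvpow x hx m]; positivity)) (Or.inr hvx), ih,
        pow_succ]
  have hresinv : ∀ x : F, x ≠ 0 → v x = 0 → res x⁻¹ = (res x)⁻¹ := by
    intro x hx hvx
    have h : res x * res x⁻¹ = 1 := by
      rw [← hres_mul x x⁻¹ (Or.inr hvx.ge) (Or.inr (by rw [hvinv x hx, hvx]; norm_num)),
        mul_inv_cancel₀ hx, hres_one]
    exact (inv_eq_of_mul_eq_one_right h).symm
  have hreszpow : ∀ x : F, x ≠ 0 → v x = 0 → ∀ n : ℤ, res (x ^ n) = res x ^ n := by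
    intro x hx hvx n
    rcases n with m | m
    · rw [Int.ofNat_eq_coe, zpow_natCast, hrespow x hx hvx.ge m, zpow_natCast]
    · rw [zpow_negSucc, hresinv _ (pow_ne_zero _ hx) (by rw [hvpow x hx, hvx, mul_zero]),
        hrespow x hx hvx.ge, ← zpow_natCast (res x), ← zpow_neg]
      norm_cast
  -- ultrametric equality
  have hlt : ∀ x y : F, x ≠ 0 → y ≠ 0 → v x < v y → x + y ≠ 0 ∧ v (x + y) = v x := by
    intro x y hx hy hxy
    have hne : x + y ≠ 0 := by
      intro h
      have hyx : y = -x := by linear_combination h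
      rw [hyx, hvneg x hx] at hxy; omega
    refine ⟨hne, ?_⟩
    have h2 := hv_add x y hx hy hne
    have h3 : v x = v ((x + y) + (-y)) := by ring_nf
    have h4 := hv_add (x + y) (-y) hne (neg_ne_zero.mpr hy) (by rw [add_neg_cancel_right]; exact hx)
    rw [← h3, hvneg y hy] at h4
    omega
  intro u hu0 hu1
  have hw0 : (1 : F) - u ≠ 0 := sub_ne_zero_of_ne (Ne.symm hu1)
  rcases lt_trichotomy (v u) 0 with hvu | hvu | hvu
  · -- v u < 0
    have hvnegu : v (-u) = v u := hvneg u hu0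
    have hw : v (1 - u) = v u := by
      have := hlt (-u) 1 (neg_ne_zero.mpr hu0) one_ne_zero (by omega)
      rw [show (-u) + 1 = 1 - u by ring] at this
      rw [this.2, hvnegu]
    -- t = (1-u) * u⁻¹ has v t = 0, res t = -1
    set t : F := (1 - u) * u⁻¹ with ht
    have ht0 : t ≠ 0 := mul_ne_zero hw0 (inv_ne_zero hu0)
    have hvt : v t = 0 := by
      rw [ht, hv_mul _ _ hw0 (inv_ne_zero hu0), hw, hvinv u hu0]; omega
    have hrest : res t = -1 := by
      have ht' : t = u⁻¹ + (-1) := by rw [ht, sub_mul, one_mul, mul_inv_cancel₀ hu0]; ring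
      rw [ht', hres_add u⁻¹ (-1) (Or.inr (by rw [hvinv u hu0]; omega))
        (Or.inr (by rw [hneg1])), hresneg1]
      have : res u⁻¹ = 0 := (hres_ker u⁻¹ (inv_ne_zero hu0) (by rw [hvinv u hu0]; omega)).mpr
        (by rw [hvinv u hu0]; omega)
      rw [this, zero_add]
    have hpowEq : (1 - u) ^ (v u) * u ^ (-(v u)) = t ^ (v u) := by
      rw [ht, mul_zpow, inv_zpow, ← zpow_neg]
    rw [htame, hw, hpowEq, hreszpow t ht0 hvt, hrest, ← zpow_add₀ (by norm_num : (-1:K) ≠ 0)]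
    exact Even.neg_one_zpow (by
      have := Int.even_mul_succ_self (v u)
      rwa [show v u * v u + v u = v u * (v u + 1) by ring])
  · -- v u = 0
    have hw : 0 ≤ v (1 - u) := by
      have := hv_add 1 (-u) one_ne_zero (neg_ne_zero.mpr hu0)
        (by rw [show (1:F) + -u = 1 - u by ring]; exact hw0)
      rw [show (1:F) + -u = 1 - u by ring, h1, hvneg u hu0, hvu] at this
      omega
    rw [htame, hvu, zero_mul, zpow_zero, one_mul, zpow_zero, one_mul,
      hreszpow u hu0 hvu]
    rcases hw.eq_or_lt with h | h
    · rw [← h, neg_zero, zpow_zero]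
    · -- res u = 1
      have hresw : res (1 - u) = 0 := (hres_ker _ hw0 hw).mpr h
      have : res (1 - u) = 1 - res u := by
        rw [show (1:F) - u = 1 + (-1) * u by ring,
          hres_add 1 ((-1)*u) (Or.inr h1.ge)
            (Or.inr (by rw [hv_mul _ _ (by norm_num) hu0, hneg1, hvu]; norm_num)),
          hres_mul (-1) u (Or.inr hneg1.ge) (Or.inr hvu.ge), hres_one, hresneg1]
        ring
      have hru : res u = 1 := by rw [this] at hresw; linear_combination -hresw
      rw [hru, one_zpow]
  · -- v u > 0
    have hru : res u = 0 := (hres_ker u hu0 hvu.le).mpr hvu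
    have hw : v (1 - u) = 0 := by
      have := hlt 1 (-u) one_ne_zero (neg_ne_zero.mpr hu0) (by rw [h1, hvneg u hu0]; omega)
      rw [show (1:F) + -u = 1 - u by ring, h1] at this
      exact this.2
    have hresw : res (1 - u) = 1 := by
      rw [show (1:F) - u = 1 + (-1) * u by ring,
        hres_add 1 ((-1)*u) (Or.inr h1.ge)
          (Or.inr (by rw [hv_mul _ _ (by norm_num) hu0, hneg1]; omega)),
        hres_mul (-1) u (Or.inr hneg1.ge) (Or.inr hvu.le), hres_one, hresneg1, hru]
      ring
    rw [htame, hw, mul_zero, zpow_zero, one_mul, neg_zero, zpow_zero, mul_one,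
      hreszpow _ hw0 hw, hresw, one_zpow]
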